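/- Let G = (V,E) be a finite simple strongly connected directed graph and fix a total ordering of V. For every vertex v ∈ V there is exactly one oriented spanning tree 𝐚 of G rooted at v such that ψ(𝐚) = V; in other words m(V,v) = 1 for every v ∈ V. -/

import Mathlib

open Classical Finset

noncomputable section

variable {V : Type*} {R : Type*} [CommRing R]

/-- An oriented spanning tree of the digraph `E` on `V`: `root` has outdegree 0
(convention `out root = root`), every other vertex `v` has a unique outgoing edge
`(v, out v)` which is an edge of the graph, and iterating `out` from any vertex
reaches the root (no cycles). -/
structure SpTree [Fintype V] (E : V → V → Prop) where
  root : V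
  out : V → V
  out_root : out root = root
  edge_mem : ∀ v, v ≠ root → E v (out v)
  reach : ∀ v, ∃ n, out^[n] v = root

theorem SpTree.ext' [Fintype V] {E : V → V → Prop} {a b : SpTree E}
    (h1 : a.root = b.root) (h2 : a.out = b.out) : a = b := by
  cases a; cases b; dsimp at h1 h2; subst h1; subst h2; rfl

noncomputable instance [Fintype V] (E : V → V → Prop) : Fintype (SpTree E) :=
  Fintype.ofInjective (fun a => (a.root, a.out)) fun a b h =>
    SpTree.ext' (congrArg Prod.fst h) (congrArg Prod.snd h)

/-- An oriented forest of the digraph `E`, rooted in the set `U`. -/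
structure SpForest [Fintype V] (E : V → V → Prop) (U : Finset V) where
  out : V → V
  out_root : ∀ v ∈ U, out v = v
  edge_mem : ∀ v, v ∉ U → E v (out v)
  reach : ∀ v, ∃ n, out^[n] v ∈ U

theorem SpForest.ext' [Fintype V] {E : V → V → Prop} {U : Finset V} {a b : SpForest E U}
    (h : a.out = b.out) : a = b := by
  cases a; cases b; dsimp at h; subst h; rfl

noncomputable instance [Fintype V] (E : V → V → Prop) (U : Finset V) :
    Fintype (SpForest E U) :=
  Fintype.ofInjective SpForest.out fun _ _ h => SpForest.ext' h

/-- The adjacency relation of the tree graph `𝒯G`: there is an edge from `a` to `b`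
if `b` is obtained from `a` by adding the edge `(a.root, b.root)` of `G` and deleting
the edge of `a` going out of `b.root`. -/
def TStep [Fintype V] (E : V → V → Prop) (a b : SpTree E) : Prop :=
  E a.root b.root ∧ a.root ≠ b.root ∧ b.out a.root = b.root ∧
    ∀ v, v ≠ a.root → v ≠ b.root → b.out v = a.out v

/-- The set `W` is strongly connected in the digraph `E` (for the induced subgraph). -/
def SConn (E : V → V → Prop) (W : Set V) : Prop :=
  ∀ u ∈ W, ∀ v ∈ W, Relation.ReflTransGen (fun a b => E a b ∧ a ∈ W ∧ b ∈ W) u v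

/-- Edge-weighted Laplacian matrix of the digraph `E`, with weight `x (v,w)` on the
edge from `v` to `w`. -/
def lapM [Fintype V] (E : V → V → Prop) (x : V × V → R) : Matrix V V R :=
  Matrix.of fun v w =>
    if v = w then -(∑ u ∈ univ.filter (fun u => E v u), x (v, u))
    else if E v w then x (v, w) else 0

/-- Schrödinger operator `L = Q + Y` with potential `y`. -/
def schrM [Fintype V] (E : V → V → Prop) (x : V × V → R) (y : V → R) : Matrix V V R :=
  lapM E x + Matrix.diagonal y

/-- Weighted adjacency matrix. -/
def adjM [Fintype V] (E : V → V → Prop) (x : V × V → R) : Matrix V V R :=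
  Matrix.of fun v w => if E v w then x (v, w) else 0

/-- Submatrix keeping rows and columns indexed by `W`. -/
def subM [Fintype V] (M : Matrix V V R) (W : Finset V) :
    Matrix {v // v ∈ W} {v // v ∈ W} R :=
  M.submatrix Subtype.val Subtype.val

/-- The lifted edge weights on the tree graph: the edge from `a` to `b` in `𝒯G`
carries the weight of the edge of `G` from `a.root` to `b.root`. -/
def xT [Fintype V] (E : V → V → Prop) (x : V × V → R) : SpTree E × SpTree E → R :=
  fun p => x (p.1.root, p.2.root)

/-- The lifted potential on the tree graph. -/
def yT [Fintype V] (E : V → V → Prop) (y : V → R) : SpTree E → R :=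
  fun a => y a.root

/-- Weight `π_𝐚` of a spanning tree: product of its edge weights. -/
def treeWt [Fintype V] {E : V → V → Prop} (x : V × V → R) (a : SpTree E) : R :=
  ∏ v ∈ univ.filter (fun v => v ≠ a.root), x (v, a.out v)

/-- Generating polynomial of the oriented spanning trees of `E`. -/
def FGpoly [Fintype V] (E : V → V → Prop) (x : V × V → R) : R :=
  ∑ a : SpTree E, treeWt x a

/-- Weight `π_𝐟` of a forest: product of its edge weights. -/
def forestWt [Fintype V] {E : V → V → Prop} {U : Finset V} (x : V × V → R)
    (f : SpForest E U) : R :=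
  ∏ v ∈ univ.filter (fun v => v ∉ U), x (v, f.out v)

/-- Generating polynomial `Ψ_U` of the oriented forests of `E` rooted in `U`. -/
def PsiF [Fintype V] (E : V → V → Prop) (U : Finset V) (x : V × V → R) : R :=
  ∑ f : SpForest E U, forestWt x f

/-- Generating polynomial of the oriented spanning trees of the tree graph `𝒯G`. -/
def FTGpoly [Fintype V] (E : V → V → Prop) (x : V × V → R) : R :=
  FGpoly (TStep E) (xT E x)

/-- The polynomial ring `ℂ[x_e (e ∈ V × V), y_v (v ∈ V)]`. -/
abbrev Rng (V : Type*) := MvPolynomial ((V × V) ⊕ V) ℂ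

/-- The edge variable `x_e`. -/
def xv {V : Type*} : V × V → Rng V := fun e => MvPolynomial.X (Sum.inl e)

/-- The vertex variable `y_v`. -/
def yv {V : Type*} : V → Rng V := fun v => MvPolynomial.X (Sum.inr v)

/-! ### The exploration algorithm -/

/-- The state of the exploration algorithm: a set `A` of explored vertices, a FIFO
list `Lq` of edges to be examined, a reservoir `F` of edges, and the set `Er` of
erased vertices. -/
structure ExpState (V : Type*) where
  A : Finset V
  Lq : List (V × V)
  F : Finset (V × V)
  Er : Finset V

/-- The list of the edges of `S` with target `w`, ordered by increasing source. -/
def sortedTo (ord : LinearOrder V) (S : Finset (V × V)) (w : V) : List (V × V) :=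
  letI := ord
  (((S.filter (fun f => f.2 = w)).image Prod.fst).sort (· ≤ ·)).map fun u => (u, w)

/-- The edge `e` belongs to the tree `a`. -/
def inTree [Fintype V] {E : V → V → Prop} (a : SpTree E) (e : V × V) : Prop :=
  e.1 ≠ a.root ∧ a.out e.1 = e.2

/-- One iteration of the exploration algorithm: pick the first edge `e` of the list,
with source `w`; if `e` belongs to the tree then add `w` to `A`, delete all edges with
source `w` from the list, and append the edges of `F` with target `w` by increasing
source; otherwise erase `w`, deleting all edges with source or target `w` from the
list and from `F`. -/
def expStep [Fintype V] {E : V → V → Prop} (ord : LinearOrder V) (a : SpTree E)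
    (s : ExpState V) : ExpState V :=
  match s.Lq with
  | [] => s
  | e :: rest =>
    if inTree a e then
      { A := insert e.1 s.A
        Lq := rest.filter (fun f => decide (f.1 ≠ e.1)) ++ sortedTo ord s.F e.1
        F := s.F
        Er := s.Er }
    else
      { A := s.A
        Lq := rest.filter (fun f => decide (f.1 ≠ e.1 ∧ f.2 ≠ e.1))
        F := s.F.filter (fun f => f.1 ≠ e.1 ∧ f.2 ≠ e.1)
        Er := insert e.1 s.Er }

/-- The initial state of the exploration algorithm run on a tree rooted at `v`:
`A = {v}`, the list consists of the edges with target `v` by increasing source, and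
`F` is the set of edges with source `≠ v`. -/
def expInit [Fintype V] {E : V → V → Prop} (ord : LinearOrder V) (a : SpTree E) :
    ExpState V :=
  letI := ord
  { A := {a.root}
    Lq := ((univ.filter (fun u => E u a.root)).sort (· ≤ ·)).map fun u => (u, a.root)
    F := univ.filter fun f : V × V => E f.1 f.2 ∧ f.1 ≠ a.root
    Er := (∅ : Finset V) }

/-- The final state of the exploration algorithm (the number of iterations below is
large enough for the list to be exhausted, after which the state no longer moves). -/
def expRun [Fintype V] {E : V → V → Prop} (ord : LinearOrder V) (a : SpTree E) :
    ExpState V :=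
  (expStep ord a)^[2 * Fintype.card (V × V) + 1] (expInit ord a)

/-- The set `φ(𝐚)` of explored vertices. -/
def expPhi [Fintype V] {E : V → V → Prop} (ord : LinearOrder V) (a : SpTree E) : Finset V :=
  (expRun ord a).A

/-- The set of erased vertices. -/
def expEr [Fintype V] {E : V → V → Prop} (ord : LinearOrder V) (a : SpTree E) : Finset V :=
  (expRun ord a).Er

/-- The set `ψ(𝐚)`: the strongly connected component of the root in the subgraph
induced on `φ(𝐚)`. -/
def expPsi [Fintype V] {E : V → V → Prop} (ord : LinearOrder V) (a : SpTree E) : Finset V :=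
  univ.filter fun u => u ∈ expPhi ord a ∧
    Relation.ReflTransGen
      (fun p q => E p q ∧ p ∈ expPhi ord a ∧ q ∈ expPhi ord a) a.root u ∧
    Relation.ReflTransGen
      (fun p q => E p q ∧ p ∈ expPhi ord a ∧ q ∈ expPhi ord a) u a.root

/-- The multiplicity `m(W, w)`: the number of oriented spanning trees `𝐚` rooted at
`w` with `ψ(𝐚) = W`. -/
def multCount [Fintype V] (E : V → V → Prop) (ord : LinearOrder V) (W : Finset V)
    (w : V) : ℕ :=
  Nat.card {a : SpTree E // a.root = w ∧ expPsi ord a = W}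

/-- The multiplicity `m(W)` (the common value of the `m(W, w)`, `w ∈ W`). -/
def multW [Fintype V] (E : V → V → Prop) (ord : LinearOrder V) (W : Finset V) : ℕ :=
  letI := ord
  if h : W.Nonempty then multCount E ord W (W.min' h) else 0

end

/-! ### Auxiliary development for Statement 8 -/

noncomputable section Statement8Aux

open Classical

variable {V : Type*} [Fintype V]

/-- Extended state for the canonical run: an exploration state plus the partial
out-map being built. -/
structure CSt (V : Type*) where
  s : ExpState V
  g : V → V

/-- Canonical exploration step: accept iff the source is unseen; record the
accepted edge in `g`. -/
def cStep (ord : LinearOrder V) (c : CSt V) : CSt V :=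
  match h : c.s.Lq with
  | [] => c
  | e :: rest =>
    if e.1 ∉ c.s.A then
      ⟨{ A := insert e.1 c.s.A
         Lq := rest.filter (fun f => decide (f.1 ≠ e.1)) ++ sortedTo ord c.s.F e.1
         F := c.s.F
         Er := c.s.Er }, Function.update c.g e.1 e.2⟩
    else
      ⟨{ A := c.s.A
         Lq := rest.filter (fun f => decide (f.1 ≠ e.1 ∧ f.2 ≠ e.1))
         F := c.s.F.filter (fun f => f.1 ≠ e.1 ∧ f.2 ≠ e.1)
         Er := insert e.1 c.s.Er }, c.g⟩

/-- Initial canonical state. -/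
def cInit (ord : LinearOrder V) (E : V → V → Prop) (v : V) : CSt V :=
  letI := ord
  ⟨{ A := {v}
     Lq := ((univ.filter (fun u => E u v)).sort (· ≤ ·)).map fun u => (u, v)
     F := univ.filter fun f : V × V => E f.1 f.2 ∧ f.1 ≠ v
     Er := (∅ : Finset V) }, id⟩

theorem mem_sortedTo (ord : LinearOrder V) (S : Finset (V × V)) (w : V) (p : V × V) :
    p ∈ sortedTo ord S w ↔ p ∈ S ∧ p.2 = w := by
  obtain ⟨p1, p2⟩ := p
  unfold sortedTo
  simp only [List.mem_map, Finset.mem_sort, Finset.mem_image, Finset.mem_filter,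
    Prod.mk.injEq]
  constructor
  · rintro ⟨u, ⟨⟨q1, q2⟩, ⟨hq, hq2⟩, hq1⟩, rfl, rfl⟩
    dsimp at hq2 hq1; subst hq2; subst hq1; exact ⟨hq, rfl⟩
  · rintro ⟨hp, rfl⟩
    exact ⟨p1, ⟨(p1, p2), ⟨hp, rfl⟩, rfl⟩, rfl, rfl⟩

theorem cStep_nil {ord : LinearOrder V} {c : CSt V} (h : c.s.Lq = []) :
    cStep ord c = c := by
  unfold cStep
  split
  · rfl
  · rename_i e rest h'
    rw [h] at h'; exact absurd h' (by simp)

theorem cStep_cons_acc {ord : LinearOrder V} {c : CSt V} {e : V × V} {rest : List (V × V)}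
    (h : c.s.Lq = e :: rest) (ha : e.1 ∉ c.s.A) :
    cStep ord c =
      ⟨{ A := insert e.1 c.s.A
         Lq := rest.filter (fun f => decide (f.1 ≠ e.1)) ++ sortedTo ord c.s.F e.1
         F := c.s.F
         Er := c.s.Er }, Function.update c.g e.1 e.2⟩ := by
  unfold cStep
  split
  · rename_i h'; rw [h] at h'; exact absurd h' (by simp)
  · rename_i e' rest' h'
    rw [h] at h'
    obtain ⟨h1, h2⟩ := List.cons.inj h'.symm
    subst h1; subst h2
    rw [if_pos ha]

theorem cStep_cons_rej {ord : LinearOrder V} {c : CSt V} {e : V × V} {rest : List (V × V)}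
    (h : c.s.Lq = e :: rest) (ha : e.1 ∈ c.s.A) :
    cStep ord c =
      ⟨{ A := c.s.A
         Lq := rest.filter (fun f => decide (f.1 ≠ e.1 ∧ f.2 ≠ e.1))
         F := c.s.F.filter (fun f => f.1 ≠ e.1 ∧ f.2 ≠ e.1)
         Er := insert e.1 c.s.Er }, c.g⟩ := by
  unfold cStep
  split
  · rename_i h'; rw [h] at h'; exact absurd h' (by simp)
  · rename_i e' rest' h'
    rw [h] at h'
    obtain ⟨h1, h2⟩ := List.cons.inj h'.symm
    subst h1; subst h2
    rw [if_neg (by simpa using ha)]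

theorem iterate_update_eq (ord : LinearOrder V) {g : V → V} {A : Finset V} {z t v : V} (hz : z ∉ A)
    (hv : v ∈ A) (hgv : g v = v) (hA : ∀ w ∈ A, w ≠ v → g w ∈ A) :
    ∀ n, ∀ w ∈ A, (Function.update g z t)^[n] w = g^[n] w := by
  intro n
  induction n with
  | zero => intro w _; rfl
  | succ n ih =>
    intro w hw
    rw [Function.iterate_succ_apply, Function.iterate_succ_apply,
      Function.update_of_ne (fun hwz : w = z => hz (hwz ▸ hw)) t g]
    by_cases hwv : w = v
    · exact ih (g w) (by rw [hwv, hgv]; exact hwv ▸ hv)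
    · exact ih (g w) (hA w hw hwv)

/-- The collection of invariants maintained by the canonical run. -/
structure CGood (E : V → V → Prop) (v : V) (c : CSt V) : Prop where
  rootA : v ∈ c.s.A
  lq_edge : ∀ p ∈ c.s.Lq, E p.1 p.2 ∧ p.1 ≠ v ∧ p.2 ∈ c.s.A
  f_edge : ∀ p ∈ c.s.F, E p.1 p.2 ∧ p.1 ≠ v
  er_sub : ∀ w ∈ c.s.Er, w ∈ c.s.A
  fcomp : ∀ u w, E u w → u ≠ v → (u, w) ∈ c.s.F ∨ u ∈ c.s.Er ∨ w ∈ c.s.Er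
  kc : ∀ u w, E u w → u ≠ v → u ∉ c.s.A → w ∈ c.s.A →
      ∃ l1 l2, c.s.Lq = l1 ++ (u, w) :: l2 ∧ ∀ f ∈ l1, f.1 ≠ w
  g_root : c.g v = v
  g_id : ∀ w, w ∉ c.s.A → c.g w = w
  g_good : ∀ w ∈ c.s.A, w ≠ v → E w (c.g w) ∧ c.g w ∈ c.s.A ∧ ∃ n, c.g^[n] w = v

theorem CGood.init (E : V → V → Prop) (ord : LinearOrder V) (v : V)
    (hs : ∀ x, ¬ E x x) : CGood E v (cInit ord E v) := by
  constructor <;> try dsimp only [cInit]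
  · exact Finset.mem_singleton_self v
  · rintro ⟨p1, p2⟩ hp
    simp only [List.mem_map, Finset.mem_sort, Finset.mem_filter,
      Prod.mk.injEq] at hp
    obtain ⟨u, ⟨-, hu⟩, rfl, rfl⟩ := hp
    exact ⟨hu, fun h => hs _ (h ▸ hu), Finset.mem_singleton_self _⟩
  · rintro ⟨p1, p2⟩ hp
    simp only [Finset.mem_filter] at hp
    exact ⟨hp.2.1, hp.2.2⟩
  · intro w hw; simp at hw
  · intro u w he hu
    left
    simp only [Finset.mem_filter]
    exact ⟨Finset.mem_univ _, he, hu⟩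
  · intro u w he hu huA hwA
    rw [Finset.mem_singleton] at hwA
    rw [hwA] at he ⊢
    have hmem : (u, v) ∈ ((univ.filter (fun x => E x v)).sort ord.le).map
        (fun x => (x, v)) := by
      simp only [List.mem_map, Finset.mem_sort, Finset.mem_filter]
      exact ⟨u, ⟨Finset.mem_univ _, he⟩, rfl⟩
    obtain ⟨l1, l2, hsplit⟩ := List.append_of_mem hmem
    refine ⟨l1, l2, hsplit, ?_⟩
    intro f hf
    have : f ∈ ((univ.filter (fun x => E x v)).sort ord.le).map (fun x => (x, v)) := by
      rw [hsplit]; exact List.mem_append_left _ hf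
    simp only [List.mem_map, Finset.mem_sort, Finset.mem_filter] at this
    obtain ⟨x, ⟨-, hx⟩, rfl⟩ := this
    exact fun h => hs _ (h ▸ hx)
  · rfl
  · intro w _; rfl
  · intro w hw hwv
    rw [Finset.mem_singleton] at hw
    exact absurd hw hwv

theorem CGood.step {E : V → V → Prop} {ord : LinearOrder V} {v : V} {c : CSt V}
    (hs : ∀ x, ¬ E x x) (h : CGood E v c) : CGood E v (cStep ord c) := by
  rcases hLq : c.s.Lq with _ | ⟨e, rest⟩
  · rwa [cStep_nil hLq]
  obtain ⟨he, hev, heA⟩ := h.lq_edge e (by rw [hLq]; exact List.mem_cons_self)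
  have hrest : ∀ p ∈ rest, E p.1 p.2 ∧ p.1 ≠ v ∧ p.2 ∈ c.s.A := by
    intro p hp; exact h.lq_edge p (by rw [hLq]; exact List.mem_cons_of_mem e hp)
  by_cases ha : e.1 ∈ c.s.A
  · -- reject
    rw [cStep_cons_rej hLq ha]
    constructor <;> dsimp only
    · exact h.rootA
    · intro p hp
      simp only [List.mem_filter] at hp
      exact hrest p hp.1
    · intro p hp
      exact h.f_edge p (Finset.mem_of_mem_filter p hp)
    · intro w hw
      rcases Finset.mem_insert.1 hw with rfl | hw
      · exact ha
      · exact h.er_sub w hw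
    · intro u w hE huv
      rcases h.fcomp u w hE huv with hF | hEr | hEr
      · by_cases h1 : u = e.1
        · exact Or.inr (Or.inl (h1 ▸ Finset.mem_insert_self _ _))
        · by_cases h2 : w = e.1
          · exact Or.inr (Or.inr (h2 ▸ Finset.mem_insert_self _ _))
          · exact Or.inl (Finset.mem_filter.2 ⟨hF, h1, h2⟩)
      · exact Or.inr (Or.inl (Finset.mem_insert_of_mem hEr))
      · exact Or.inr (Or.inr (Finset.mem_insert_of_mem hEr))
    · intro u w hE huv huA hwA
      obtain ⟨l1, l2, hspl, hpre⟩ := h.kc u w hE huv huA hwA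
      rw [hLq] at hspl
      rcases l1 with _ | ⟨h1, l1'⟩
      · simp only [List.nil_append, List.cons.injEq] at hspl
        have he1 : e.1 = u := by rw [hspl.1]
        exact absurd (he1 ▸ ha) huA
      · simp only [List.cons_append, List.cons.injEq] at hspl
        obtain ⟨rfl, hrest'⟩ := hspl
        have hne1 : u ≠ e.1 := fun hh => huA (hh ▸ ha)
        have hne2 : w ≠ e.1 := fun hh =>
          (hpre e (List.mem_cons_self)) (hh ▸ rfl)
        refine ⟨l1'.filter (fun f => decide (f.1 ≠ e.1 ∧ f.2 ≠ e.1)), l2.filter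
          (fun f => decide (f.1 ≠ e.1 ∧ f.2 ≠ e.1)), ?_, ?_⟩
        · rw [hrest', List.filter_append, List.filter_cons_of_pos]
          simp [hne1, hne2]
        · intro f hf
          exact hpre f (List.mem_cons_of_mem e (List.mem_filter.1 hf).1)
    · exact h.g_root
    · exact h.g_id
    · exact h.g_good
  · -- accept
    rw [cStep_cons_acc hLq ha]
    have hupd : ∀ w ∈ c.s.A, Function.update c.g e.1 e.2 w = c.g w := by
      intro w hw
      exact Function.update_of_ne (fun hh : w = e.1 => ha (hh ▸ hw)) _ _
    constructor <;> dsimp only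
    · exact Finset.mem_insert_of_mem h.rootA
    · intro p hp
      rcases List.mem_append.1 hp with hp | hp
      · obtain ⟨hE, hpv, hpA⟩ := hrest p (List.mem_of_mem_filter hp)
        exact ⟨hE, hpv, Finset.mem_insert_of_mem hpA⟩
      · obtain ⟨hF, h2⟩ := (mem_sortedTo ord c.s.F e.1 p).1 hp
        obtain ⟨hE, hpv⟩ := h.f_edge p hF
        exact ⟨hE, hpv, h2 ▸ Finset.mem_insert_self _ _⟩
    · exact h.f_edge
    · intro w hw
      exact Finset.mem_insert_of_mem (h.er_sub w hw)
    · intro u w hE huv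
      exact h.fcomp u w hE huv
    · intro u w hE huv huA hwA
      have huA' : u ∉ c.s.A := fun hh => huA (Finset.mem_insert_of_mem hh)
      have hue : u ≠ e.1 := fun hh => huA (hh ▸ Finset.mem_insert_self _ _)
      rcases Finset.mem_insert.1 hwA with rfl | hwA'
      · -- w = e.1
        have hF : (u, e.1) ∈ c.s.F := by
          rcases h.fcomp u e.1 hE huv with hF | hEr | hEr
          · exact hF
          · exact absurd (h.er_sub u hEr) huA'
          · exact absurd (h.er_sub e.1 hEr) ha
        have hmem : (u, e.1) ∈ sortedTo ord c.s.F e.1 :=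
          (mem_sortedTo ord c.s.F e.1 (u, e.1)).2 ⟨hF, rfl⟩
        obtain ⟨s1, s2, hs12⟩ := List.append_of_mem hmem
        refine ⟨rest.filter (fun f => decide (f.1 ≠ e.1)) ++ s1, s2, ?_, ?_⟩
        · rw [hs12, List.append_assoc]
        · intro f hf
          rcases List.mem_append.1 hf with hf | hf
          · simpa using (List.of_mem_filter hf)
          · have hfm : f ∈ sortedTo ord c.s.F e.1 := by
              rw [hs12]; exact List.mem_append_left _ hf
            obtain ⟨hfF, hf2⟩ := (mem_sortedTo ord c.s.F e.1 f).1 hfm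
            intro hf1
            exact hs e.1 (by have := (h.f_edge f hfF).1; rwa [hf1, hf2] at this)
      · -- w ∈ old A
        obtain ⟨l1, l2, hspl, hpre⟩ := h.kc u w hE huv huA' hwA'
        rw [hLq] at hspl
        rcases l1 with _ | ⟨h1, l1'⟩
        · simp only [List.nil_append, List.cons.injEq] at hspl
          have he1 : e.1 = u := by rw [hspl.1]
          exact absurd (he1 ▸ Finset.mem_insert_self e.1 c.s.A) huA
        · simp only [List.cons_append, List.cons.injEq] at hspl
          obtain ⟨rfl, hrest'⟩ := hspl
          refine ⟨l1'.filter (fun f => decide (f.1 ≠ e.1)), l2.filter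
            (fun f => decide (f.1 ≠ e.1)) ++ sortedTo ord c.s.F e.1, ?_, ?_⟩
          · rw [hrest', List.filter_append, List.filter_cons_of_pos]
            · simp [List.append_assoc]
            · simpa using hue
          · intro f hf
            exact hpre f (List.mem_cons_of_mem e (List.mem_filter.1 hf).1)
    · rw [Function.update_of_ne (Ne.symm hev) _ _]
      exact h.g_root
    · intro w hw
      have hw1 : w ≠ e.1 := fun hh => hw (hh ▸ Finset.mem_insert_self _ _)
      have hw2 : w ∉ c.s.A := fun hh => hw (Finset.mem_insert_of_mem hh)
      rw [Function.update_of_ne hw1 _ _]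
      exact h.g_id w hw2
    · intro w hw hwv
      have hiter := iterate_update_eq ord (g := c.g) (A := c.s.A) (z := e.1) (t := e.2)
        (v := v) ha h.rootA h.g_root (fun x hx hxv => (h.g_good x hx hxv).2.1)
      rcases Finset.mem_insert.1 hw with rfl | hwA'
      · rw [Function.update_self]
        refine ⟨he, Finset.mem_insert_of_mem heA, ?_⟩
        by_cases h2v : e.2 = v
        · exact ⟨1, by simp [Function.update_self, h2v]⟩
        · obtain ⟨n, hn⟩ := (h.g_good e.2 heA h2v).2.2
          exact ⟨n + 1, by
            rw [Function.iterate_succ_apply, Function.update_self, hiter n e.2 heA, hn]⟩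
      · rw [hupd w hwA']
        obtain ⟨h1, h2, n, hn⟩ := h.g_good w hwA' hwv
        exact ⟨h1, Finset.mem_insert_of_mem h2, n, by rw [hiter n w hwA', hn]⟩

theorem cStep_mono (ord : LinearOrder V) (c : CSt V) :
    c.s.A ⊆ (cStep ord c).s.A ∧ ∀ w ∈ c.s.A, (cStep ord c).g w = c.g w := by
  rcases hLq : c.s.Lq with _ | ⟨e, rest⟩
  · rw [cStep_nil hLq]; exact ⟨Finset.Subset.refl _, fun w _ => rfl⟩
  by_cases ha : e.1 ∈ c.s.A
  · rw [cStep_cons_rej hLq ha]; exact ⟨Finset.Subset.refl _, fun w _ => rfl⟩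
  · rw [cStep_cons_acc hLq ha]
    refine ⟨Finset.subset_insert _ _, fun w hw => ?_⟩
    exact Function.update_of_ne (fun hh : w = e.1 => ha (hh ▸ hw)) _ _

theorem cSteps_mono (ord : LinearOrder V) (c : CSt V) (m : ℕ) :
    c.s.A ⊆ ((cStep ord)^[m] c).s.A ∧
      ∀ w ∈ c.s.A, ((cStep ord)^[m] c).g w = c.g w := by
  induction m with
  | zero => exact ⟨Finset.Subset.refl _, fun w _ => rfl⟩
  | succ m ih =>
    rw [Function.iterate_succ_apply']
    obtain ⟨h1, h2⟩ := ih
    obtain ⟨h3, h4⟩ := cStep_mono ord ((cStep ord)^[m] c)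
    exact ⟨fun w hw => h3 (h1 hw), fun w hw => (h4 w (h1 hw)).trans (h2 w hw)⟩

theorem sortedTo_length (ord : LinearOrder V) (S : Finset (V × V)) (w : V) :
    (sortedTo ord S w).length = (S.filter (fun f => f.2 = w)).card := by
  unfold sortedTo
  rw [List.length_map, Finset.length_sort, Finset.card_image_of_injOn]
  intro p hp q hq hpq
  rw [Finset.mem_coe, Finset.mem_filter] at hp hq
  exact Prod.ext hpq (hp.2.trans hq.2.symm)

/-- Potential function showing that the list is eventually exhausted. -/
def cPot (ord : LinearOrder V) (c : CSt V) : ℕ :=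
  c.s.Lq.length + (c.s.F.filter (fun f => f.2 ∉ c.s.A)).card

theorem cPot_step {ord : LinearOrder V} {c : CSt V} (hc : c.s.Lq ≠ []) :
    cPot ord (cStep ord c) < cPot ord c := by
  rcases hLq : c.s.Lq with _ | ⟨e, rest⟩
  · exact absurd hLq hc
  by_cases ha : e.1 ∈ c.s.A
  · rw [cStep_cons_rej hLq ha]
    unfold cPot
    dsimp only
    rw [hLq]
    have h1 : (rest.filter (fun f => decide (f.1 ≠ e.1 ∧ f.2 ≠ e.1))).length ≤
        rest.length := List.length_filter_le _ _
    have h2 : ((c.s.F.filter (fun f => f.1 ≠ e.1 ∧ f.2 ≠ e.1)).filter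
        (fun f => f.2 ∉ c.s.A)).card ≤ (c.s.F.filter (fun f => f.2 ∉ c.s.A)).card := by
      apply Finset.card_le_card
      intro f hf
      rw [Finset.mem_filter] at hf ⊢
      exact ⟨Finset.mem_of_mem_filter f hf.1, hf.2⟩
    simp only [List.length_cons]
    omega
  · rw [cStep_cons_acc hLq ha]
    unfold cPot
    dsimp only
    rw [hLq]
    rw [List.length_append, sortedTo_length]
    have h1 : (rest.filter (fun f => decide (f.1 ≠ e.1))).length ≤ rest.length :=
      List.length_filter_le _ _
    have hsplit : c.s.F.filter (fun f => f.2 ∉ c.s.A) =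
        (c.s.F.filter fun f => f.2 ∉ insert e.1 c.s.A) ∪
          (c.s.F.filter fun f => f.2 = e.1) := by
      rw [← Finset.filter_or]
      apply Finset.filter_congr
      intro f _
      simp only [Finset.mem_insert, eq_iff_iff]
      constructor
      · intro hf
        by_cases hfe : f.2 = e.1
        · exact Or.inr hfe
        · exact Or.inl (fun hh => hh.elim hfe hf)
      · rintro (hf | hf)
        · exact fun hh => hf (Or.inr hh)
        · exact fun hh => ha (hf ▸ hh)
    have hdisj : Disjoint (c.s.F.filter fun f => f.2 ∉ insert e.1 c.s.A)
        (c.s.F.filter fun f => f.2 = e.1) := by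
      rw [Finset.disjoint_left]
      intro f hf1 hf2
      rw [Finset.mem_filter] at hf1 hf2
      exact hf1.2 (hf2.2 ▸ Finset.mem_insert_self _ _)
    have hcard := Finset.card_union_of_disjoint hdisj
    rw [← hsplit] at hcard
    simp only [List.length_cons]
    omega

theorem lq_empty_of_pot (ord : LinearOrder V) :
    ∀ m (c : CSt V), cPot ord c ≤ m → ((cStep ord)^[m] c).s.Lq = [] := by
  intro m
  induction m with
  | zero =>
    intro c hc
    have : c.s.Lq.length = 0 := by unfold cPot at hc; omega
    exact List.length_eq_zero_iff.1 this
  | succ m ih =>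
    intro c hc
    by_cases h : c.s.Lq = []
    · rw [Function.iterate_fixed (cStep_nil h) (m + 1)]
      exact h
    · rw [Function.iterate_succ_apply]
      apply ih
      have := cPot_step (ord := ord) h
      omega

theorem expStep_nil {E : V → V → Prop} {a : SpTree E} {ord : LinearOrder V}
    {s : ExpState V} (h : s.Lq = []) : expStep ord a s = s := by
  unfold expStep
  split
  · rfl
  · rename_i e rest h'
    rw [h] at h'; exact absurd h' (by simp)

theorem expStep_cons_acc {E : V → V → Prop} {a : SpTree E} {ord : LinearOrder V}
    {s : ExpState V} {e : V × V} {rest : List (V × V)}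
    (h : s.Lq = e :: rest) (ht : inTree a e) :
    expStep ord a s =
      { A := insert e.1 s.A
        Lq := rest.filter (fun f => decide (f.1 ≠ e.1)) ++ sortedTo ord s.F e.1
        F := s.F
        Er := s.Er } := by
  unfold expStep
  split
  · rename_i h'; rw [h] at h'; exact absurd h' (by simp)
  · rename_i e' rest' h'
    rw [h] at h'
    obtain ⟨h1, h2⟩ := List.cons.inj h'.symm
    subst h1; subst h2
    rw [if_pos ht]

theorem expStep_cons_rej {E : V → V → Prop} {a : SpTree E} {ord : LinearOrder V}
    {s : ExpState V} {e : V × V} {rest : List (V × V)}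
    (h : s.Lq = e :: rest) (ht : ¬ inTree a e) :
    expStep ord a s =
      { A := s.A
        Lq := rest.filter (fun f => decide (f.1 ≠ e.1 ∧ f.2 ≠ e.1))
        F := s.F.filter (fun f => f.1 ≠ e.1 ∧ f.2 ≠ e.1)
        Er := insert e.1 s.Er } := by
  unfold expStep
  split
  · rename_i h'; rw [h] at h'; exact absurd h' (by simp)
  · rename_i e' rest' h'
    rw [h] at h'
    obtain ⟨h1, h2⟩ := List.cons.inj h'.symm
    subst h1; subst h2
    rw [if_neg ht]

/-- A vertex is dead in a state: no edge out of it anywhere, and unexplored.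
This is stable under steps, so a dead vertex is never explored. -/
def IsDead (s : ExpState V) (w : V) : Prop :=
  (∀ t, (w, t) ∉ s.Lq) ∧ (∀ t, (w, t) ∉ s.F) ∧ w ∉ s.A

theorem IsDead.step {E : V → V → Prop} {a : SpTree E} {ord : LinearOrder V}
    {s : ExpState V} {w : V} (h : IsDead s w) : IsDead (expStep ord a s) w := by
  obtain ⟨hLqd, hFd, hAd⟩ := h
  rcases hLq : s.Lq with _ | ⟨⟨e1, e2⟩, rest⟩
  · rw [expStep_nil hLq]; exact ⟨hLqd, hFd, hAd⟩
  have hrest : ∀ t, (w, t) ∉ rest := by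
    intro t ht
    exact hLqd t (by rw [hLq]; exact List.mem_cons_of_mem _ ht)
  have hwe : w ≠ e1 := by
    intro hh
    exact hLqd e2 (by rw [hLq, hh]; exact List.mem_cons_self)
  by_cases ht : inTree a (e1, e2)
  · rw [expStep_cons_acc hLq ht]
    refine ⟨?_, hFd, ?_⟩
    · intro t htm
      rcases List.mem_append.1 htm with hm | hm
      · exact hrest t (List.mem_of_mem_filter hm)
      · exact hFd t ((mem_sortedTo ord s.F e1 (w, t)).1 hm).1
    · intro hm
      rcases Finset.mem_insert.1 hm with hh | hh
      · exact hwe hh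
      · exact hAd hh
  · rw [expStep_cons_rej hLq ht]
    refine ⟨?_, ?_, hAd⟩
    · intro t htm
      exact hrest t (List.mem_of_mem_filter htm)
    · intro t htm
      exact hFd t (Finset.mem_of_mem_filter _ htm)

theorem IsDead.steps {E : V → V → Prop} {a : SpTree E} {ord : LinearOrder V}
    {s : ExpState V} {w : V} (h : IsDead s w) (m : ℕ) :
    IsDead ((expStep ord a)^[m] s) w := by
  induction m with
  | zero => exact h
  | succ m ih => rw [Function.iterate_succ_apply']; exact ih.step

variable (E : V → V → Prop) (ord : LinearOrder V) (v : V)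

/-- The state of the canonical run after `k` steps. -/
def cS (k : ℕ) : CSt V := (cStep ord)^[k] (cInit ord E v)

theorem cS_good (hs : ∀ x, ¬ E x x) (k : ℕ) : CGood E v (cS E ord v k) := by
  induction k with
  | zero => exact CGood.init E ord v hs
  | succ k ih =>
    rw [cS, Function.iterate_succ_apply']
    exact ih.step hs

theorem cS_lq_nil : (cS E ord v (2 * Fintype.card (V × V) + 1)).s.Lq = [] := by
  apply lq_empty_of_pot
  have h1 : (cInit ord E v).s.Lq.length ≤ Fintype.card V := by
    dsimp only [cInit]
    rw [List.length_map, Finset.length_sort]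
    exact le_trans (Finset.card_filter_le _ _) (le_of_eq (Finset.card_univ))
  have h2 : ((cInit ord E v).s.F.filter
      (fun f => f.2 ∉ (cInit ord E v).s.A)).card ≤ Fintype.card (V × V) :=
    le_trans (Finset.card_le_univ _) (le_of_eq (Finset.card_univ))
  have h3 : Fintype.card V ≤ Fintype.card (V × V) := by
    rw [Fintype.card_prod]
    have : 0 < Fintype.card V := Fintype.card_pos_iff.2 ⟨v⟩
    nlinarith
  unfold cPot
  omega

theorem cS_A_univ (hs : ∀ x, ¬ E x x) (hsc : SConn E Set.univ) :
    (cS E ord v (2 * Fintype.card (V × V) + 1)).s.A = univ := by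
  set c := cS E ord v (2 * Fintype.card (V × V) + 1) with hc
  have good : CGood E v c := cS_good E ord v hs _
  have hnil : c.s.Lq = [] := cS_lq_nil E ord v
  apply Finset.eq_univ_iff_forall.2
  intro u
  have hu := hsc u (Set.mem_univ u) v (Set.mem_univ v)
  clear_value c
  induction hu using Relation.ReflTransGen.head_induction_on with
  | refl => exact good.rootA
  | head hab _ ih =>
    rename_i x y _
    by_cases hxv : x = v
    · exact hxv ▸ good.rootA
    · by_contra hxA
      obtain ⟨l1, l2, hspl, -⟩ := good.kc x y hab.1 hxv hxA ih
      rw [hnil] at hspl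
      exact List.not_mem_nil (a := (x, y)) (hspl ▸ List.mem_append_right l1
        (List.mem_cons_self))

theorem cS_add (k m : ℕ) : cS E ord v (m + k) = (cStep ord)^[m] (cS E ord v k) := by
  unfold cS; rw [Function.iterate_add_apply]

theorem cS_mono_le {k m : ℕ} (hkm : k ≤ m) :
    (cS E ord v k).s.A ⊆ (cS E ord v m).s.A ∧
      ∀ w ∈ (cS E ord v k).s.A, (cS E ord v m).g w = (cS E ord v k).g w := by
  have h := cSteps_mono ord (cS E ord v k) (m - k)
  rw [← cS_add, Nat.sub_add_cancel hkm] at h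
  exact h

theorem cS_succ (k : ℕ) : cS E ord v (k + 1) = cStep ord (cS E ord v k) := by
  unfold cS; rw [Function.iterate_succ_apply']

theorem cS_invT (hs : ∀ x, ¬ E x x) :
    ∀ k, k ≤ 2 * Fintype.card (V × V) + 1 →
      ∀ w ∈ (cS E ord v k).s.A, w ≠ v →
        (w, (cS E ord v (2 * Fintype.card (V × V) + 1)).g w) ∉ (cS E ord v k).s.Lq ∧
        (cS E ord v (2 * Fintype.card (V × V) + 1)).g w ∈ (cS E ord v k).s.A := by
  set N := 2 * Fintype.card (V × V) + 1 with hN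
  set gN := (cS E ord v N).g with hgN
  intro k
  induction k with
  | zero =>
    intro _ w hw hwv
    have : w = v := by
      have : w ∈ ({v} : Finset V) := hw
      exact Finset.mem_singleton.1 this
    exact absurd this hwv
  | succ k ih =>
    intro hk1
    have hk : k ≤ N := Nat.le_of_succ_le hk1
    have good := cS_good E ord v hs k
    rcases hLq : (cS E ord v k).s.Lq with _ | ⟨⟨e1, e2⟩, rest⟩
    · rw [cS_succ, cStep_nil hLq]
      exact ih hk
    have hemem : ((e1, e2) : V × V) ∈ (cS E ord v k).s.Lq := by
      rw [hLq]; exact List.mem_cons_self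
    obtain ⟨he, hev, heA⟩ := good.lq_edge (e1, e2) hemem
    by_cases ha : e1 ∈ (cS E ord v k).s.A
    · rw [cS_succ, cStep_cons_rej hLq ha]
      intro w hw hwv
      dsimp only at hw ⊢
      obtain ⟨ih1, ih2⟩ := ih hk w hw hwv
      refine ⟨?_, ih2⟩
      intro hm
      have hm' : (w, gN w) ∈ rest := List.mem_of_mem_filter hm
      exact ih1 (by rw [hLq]; exact List.mem_cons_of_mem _ hm')
    · rw [cS_succ, cStep_cons_acc hLq ha]
      have hg1 : gN e1 = e2 := by
        have h1 : (cS E ord v (k + 1)).g e1 = e2 := by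
          rw [cS_succ, cStep_cons_acc hLq ha]
          exact Function.update_self _ _ _
        have h2 : e1 ∈ (cS E ord v (k + 1)).s.A := by
          rw [cS_succ, cStep_cons_acc hLq ha]
          exact Finset.mem_insert_self _ _
        rw [hgN, (cS_mono_le E ord v hk1).2 e1 h2, h1]
      intro w hw hwv
      dsimp only at hw
      rcases Finset.mem_insert.1 hw with hwe | hwA
      · rw [hwe]
        constructor
        · intro hm
          dsimp only at hm
          rcases List.mem_append.1 hm with hm | hm
          · simpa using (List.mem_filter.1 hm).2
          · have h2 := (mem_sortedTo ord _ e1 _).1 hm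
            have h3 : e2 = e1 := by rw [← hg1]; exact h2.2
            exact hs e1 (h3 ▸ he)
        · dsimp only
          rw [hg1]
          exact Finset.mem_insert_of_mem heA
      · obtain ⟨ih1, ih2⟩ := ih hk w hwA hwv
        constructor
        · intro hm
          dsimp only at hm
          rcases List.mem_append.1 hm with hm | hm
          · have hm' : (w, gN w) ∈ rest := List.mem_of_mem_filter hm
            exact ih1 (by rw [hLq]; exact List.mem_cons_of_mem _ hm')
          · have h2 := (mem_sortedTo ord _ e1 _).1 hm
            exact ha (h2.2 ▸ ih2)
        · exact Finset.mem_insert_of_mem ih2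

theorem expInit_eq (a : SpTree E) (hroot : a.root = v) :
    expInit ord a = (cInit ord E v).s := by
  subst hroot
  rfl

/-- The canonical spanning tree produced by the canonical run. -/
def canonTree (hs : ∀ x, ¬ E x x) (hsc : SConn E Set.univ) : SpTree E where
  root := v
  out := (cS E ord v (2 * Fintype.card (V × V) + 1)).g
  out_root := (cS_good E ord v hs _).g_root
  edge_mem := fun w hw => ((cS_good E ord v hs _).g_good w
    (by rw [cS_A_univ E ord v hs hsc]; exact Finset.mem_univ w) hw).1
  reach := by
    intro w
    by_cases hwv : w = v
    · exact ⟨0, hwv⟩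
    · exact ((cS_good E ord v hs _).g_good w
        (by rw [cS_A_univ E ord v hs hsc]; exact Finset.mem_univ w) hwv).2.2

/-- Main synchronisation lemma: if at each step the tree decision agrees with the
canonical decision "the source is unseen", then the run of the tree coincides with
the canonical run, and the out-map agrees on explored vertices. -/
theorem run_eq_OA (a : SpTree E) (hroot : a.root = v)
    (hdec : ∀ k, k < 2 * Fintype.card (V × V) + 1 →
      (expStep ord a)^[k] (expInit ord a) = (cS E ord v k).s →
      (∀ w ∈ (cS E ord v k).s.A, w ≠ v → a.out w = (cS E ord v k).g w) →
      ∀ e rest, (cS E ord v k).s.Lq = e :: rest →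
        (inTree a e ↔ e.1 ∉ (cS E ord v k).s.A)) :
    ∀ k, k ≤ 2 * Fintype.card (V × V) + 1 →
      (expStep ord a)^[k] (expInit ord a) = (cS E ord v k).s ∧
      ∀ w ∈ (cS E ord v k).s.A, w ≠ v → a.out w = (cS E ord v k).g w := by
  intro k
  induction k with
  | zero =>
    intro _
    refine ⟨expInit_eq E ord v a hroot, ?_⟩
    intro w hw hwv
    have hw' : w ∈ ({v} : Finset V) := hw
    exact absurd (Finset.mem_singleton.1 hw') hwv
  | succ k ih =>
    intro hk1
    have hk : k ≤ 2 * Fintype.card (V × V) + 1 := Nat.le_of_succ_le hk1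
    obtain ⟨heq, hOA⟩ := ih hk
    rcases hLq : (cS E ord v k).s.Lq with _ | ⟨e, rest⟩
    · rw [cS_succ, cStep_nil hLq]
      refine ⟨?_, hOA⟩
      rw [Function.iterate_succ_apply', heq, expStep_nil hLq]
    · have hiff := hdec k (Nat.lt_of_succ_le hk1) heq hOA e rest hLq
      by_cases ha : e.1 ∈ (cS E ord v k).s.A
      · have hnt : ¬ inTree a e := fun h => (hiff.1 h) ha
        constructor
        · rw [Function.iterate_succ_apply', heq, expStep_cons_rej hLq hnt,
            cS_succ, cStep_cons_rej hLq ha]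
        · rw [cS_succ, cStep_cons_rej hLq ha]
          exact hOA
      · have ht : inTree a e := hiff.2 ha
        constructor
        · rw [Function.iterate_succ_apply', heq, expStep_cons_acc hLq ht,
            cS_succ, cStep_cons_acc hLq ha]
        · rw [cS_succ, cStep_cons_acc hLq ha]
          intro w hw hwv
          dsimp only at hw ⊢
          rcases Finset.mem_insert.1 hw with hwe | hwA
          · rw [hwe, Function.update_self]
            exact hwe ▸ ht.2
          · rw [Function.update_of_ne (fun hh : w = e.1 => ha (hh ▸ hwA)) _ _]
            exact hOA w hwA hwv

theorem canon_dec (hs : ∀ x, ¬ E x x) (hsc : SConn E Set.univ) :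
    ∀ k, k < 2 * Fintype.card (V × V) + 1 →
      (expStep ord (canonTree E ord v hs hsc))^[k]
          (expInit ord (canonTree E ord v hs hsc)) = (cS E ord v k).s →
      (∀ w ∈ (cS E ord v k).s.A, w ≠ v →
        (canonTree E ord v hs hsc).out w = (cS E ord v k).g w) →
      ∀ e rest, (cS E ord v k).s.Lq = e :: rest →
        (inTree (canonTree E ord v hs hsc) e ↔ e.1 ∉ (cS E ord v k).s.A) := by
  intro k hk _ _ e rest hLq
  obtain ⟨e1, e2⟩ := e
  have hemem : ((e1, e2) : V × V) ∈ (cS E ord v k).s.Lq := by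
    rw [hLq]; exact List.mem_cons_self
  have good := cS_good E ord v hs k
  obtain ⟨he, hev, heA⟩ := good.lq_edge (e1, e2) hemem
  constructor
  · intro ht ha
    have hIT := (cS_invT E ord v hs k (le_of_lt hk) e1 ha hev).1
    have hout : (cS E ord v (2 * Fintype.card (V × V) + 1)).g e1 = e2 := ht.2
    rw [hout] at hIT
    exact hIT hemem
  · intro ha
    refine ⟨hev, ?_⟩
    have h1 : (cS E ord v (k + 1)).g e1 = e2 := by
      rw [cS_succ, cStep_cons_acc hLq ha]
      exact Function.update_self _ _ _
    have h2 : e1 ∈ (cS E ord v (k + 1)).s.A := by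
      rw [cS_succ, cStep_cons_acc hLq ha]
      exact Finset.mem_insert_self _ _
    show (cS E ord v (2 * Fintype.card (V × V) + 1)).g e1 = e2
    rw [(cS_mono_le E ord v (Nat.succ_le_of_lt hk)).2 e1 h2, h1]

theorem canon_phi (hs : ∀ x, ¬ E x x) (hsc : SConn E Set.univ) :
    expPhi ord (canonTree E ord v hs hsc) = univ := by
  have h := run_eq_OA E ord v (canonTree E ord v hs hsc) rfl
    (canon_dec E ord v hs hsc) (2 * Fintype.card (V × V) + 1) le_rfl
  unfold expPhi expRun
  rw [h.1]
  exact cS_A_univ E ord v hs hsc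

theorem phi_univ_unique (hs : ∀ x, ¬ E x x) (hsc : SConn E Set.univ)
    (a : SpTree E) (hroot : a.root = v) (hphi : expPhi ord a = univ) :
    a = canonTree E ord v hs hsc := by
  have hdec : ∀ k, k < 2 * Fintype.card (V × V) + 1 →
      (expStep ord a)^[k] (expInit ord a) = (cS E ord v k).s →
      (∀ w ∈ (cS E ord v k).s.A, w ≠ v → a.out w = (cS E ord v k).g w) →
      ∀ e rest, (cS E ord v k).s.Lq = e :: rest →
        (inTree a e ↔ e.1 ∉ (cS E ord v k).s.A) := by
    intro k hk heq hOA e rest hLq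
    obtain ⟨e1, e2⟩ := e
    have hemem : ((e1, e2) : V × V) ∈ (cS E ord v k).s.Lq := by
      rw [hLq]; exact List.mem_cons_self
    have good := cS_good E ord v hs k
    obtain ⟨he, hev, heA⟩ := good.lq_edge (e1, e2) hemem
    constructor
    · intro ht ha
      have hIT := (cS_invT E ord v hs k (le_of_lt hk) e1 ha hev).1
      have hout : (cS E ord v (2 * Fintype.card (V × V) + 1)).g e1 = e2 := by
        rw [(cS_mono_le E ord v (le_of_lt hk)).2 e1 ha, ← hOA e1 ha hev]
        exact ht.2
      rw [hout] at hIT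
      exact hIT hemem
    · intro ha
      by_contra hnt
      have hdead : IsDead (expStep ord a ((cS E ord v k).s)) e1 := by
        rw [expStep_cons_rej hLq hnt]
        refine ⟨?_, ?_, ha⟩
        · intro t htm
          dsimp only at htm
          simpa using (List.mem_filter.1 htm).2
        · intro t htm
          dsimp only at htm
          exact (Finset.mem_filter.1 htm).2.1 rfl
      have hdead2 := hdead.steps (a := a) (ord := ord)
        (2 * Fintype.card (V × V) + 1 - (k + 1))
      have harith : (2 * Fintype.card (V × V) + 1 - (k + 1)) + (k + 1) =
          2 * Fintype.card (V × V) + 1 := by omega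
      have hphi' : expPhi ord a = ((expStep ord a)^[2 * Fintype.card (V × V) + 1 - (k + 1)]
          ((expStep ord a)^[k + 1] (expInit ord a))).A := by
        unfold expPhi expRun
        rw [← Function.iterate_add_apply, harith]
      have hrun : (expStep ord a)^[k + 1] (expInit ord a) =
          expStep ord a ((cS E ord v k).s) := by
        rw [Function.iterate_succ_apply', heq]
      have he1 : e1 ∉ expPhi ord a := by
        rw [hphi', hrun]
        exact hdead2.2.2
      rw [hphi] at he1
      exact he1 (Finset.mem_univ e1)
  have main := run_eq_OA E ord v a hroot hdec (2 * Fintype.card (V × V) + 1) le_rfl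
  have hA := cS_A_univ E ord v hs hsc
  apply SpTree.ext' hroot
  funext w
  by_cases hwv : w = v
  · have h1 : a.out w = w := by
      have h0 := a.out_root
      rw [hroot] at h0
      rw [hwv]; exact h0
    have h2 : (canonTree E ord v hs hsc).out w = w := by
      rw [hwv]; exact (cS_good E ord v hs _).g_root
    rw [h1, h2]
  · exact main.2 w (by rw [hA]; exact Finset.mem_univ w) hwv

theorem psi_univ_phi_univ (a : SpTree E) (hpsi : expPsi ord a = univ) :
    expPhi ord a = univ := by
  apply Finset.eq_univ_iff_forall.2
  intro u
  have hu : u ∈ expPsi ord a := by rw [hpsi]; exact Finset.mem_univ u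
  exact (Finset.mem_filter.1 hu).2.1

theorem canon_psi (hs : ∀ x, ¬ E x x) (hsc : SConn E Set.univ) :
    expPsi ord (canonTree E ord v hs hsc) = univ := by
  have hphi := canon_phi E ord v hs hsc
  apply Finset.eq_univ_iff_forall.2
  intro u
  apply Finset.mem_filter.2
  refine ⟨Finset.mem_univ u, ?_, ?_, ?_⟩
  · rw [hphi]; exact Finset.mem_univ u
  · refine Relation.ReflTransGen.mono ?_ _ _
      (hsc (canonTree E ord v hs hsc).root (Set.mem_univ _) u (Set.mem_univ u))
    intro x y hxy
    refine ⟨hxy.1, ?_, ?_⟩ <;> rw [hphi] <;> exact Finset.mem_univ _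
  · refine Relation.ReflTransGen.mono ?_ _ _
      (hsc u (Set.mem_univ u) (canonTree E ord v hs hsc).root (Set.mem_univ _))
    intro x y hxy
    refine ⟨hxy.1, ?_, ?_⟩ <;> rw [hphi] <;> exact Finset.mem_univ _

end Statement8Aux

/-- For every vertex `v` of a finite simple strongly connected
digraph `G` (with a fixed total ordering of the vertices), there is exactly one
oriented spanning tree `𝐚` of `G` rooted at `v` with `ψ(𝐚) = V`, i.e.
`m(V, v) = 1`. -/
theorem statement8 {V : Type} [Fintype V] (E : V → V → Prop) (ord : LinearOrder V)
    (hsimple : ∀ v, ¬ E v v) (hsc : SConn E Set.univ) (v : V) :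
    multCount E ord univ v = 1 := by
  unfold multCount
  have huniq : ∀ x : {a : SpTree E // a.root = v ∧ expPsi ord a = univ},
      x.1 = canonTree E ord v hsimple hsc :=
    fun x => phi_univ_unique E ord v hsimple hsc x.1 x.2.1
      (psi_univ_phi_univ E ord x.1 x.2.2)
  rw [Nat.card_eq_one_iff_unique]
  constructor
  · exact ⟨fun x y => Subtype.ext ((huniq x).trans (huniq y).symm)⟩
  · exact ⟨⟨canonTree E ord v hsimple hsc, rfl, canon_psi E ord v hsimple hsc⟩⟩
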